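/- Let A, B, C be three affinely independent points in the Euclidean plane ℝ² and let P be a point in the interior of the triangle ABC (i.e., in the interior of the convex hull of {A, B, C}). Then sin(∠ P A B) · sin(∠ P B C) · sin(∠ P C A) = sin(∠ P A C) · sin(∠ P B A) · sin(∠ P C B), where ∠ X Y Z denotes the undirected angle at the vertex Y between the rays YX and YZ. -/

import Mathlib

open EuclideanGeometry InnerProductGeometry

lemma gram_eq_ceva_aux (u v : EuclideanSpace ℝ (Fin 2)) :
    (inner ℝ (u - v) (u - v) * inner ℝ (-v) (-v) - inner ℝ (u - v) (-v) * inner ℝ (u - v) (-v) : ℝ) =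
      inner ℝ u u * inner ℝ v v - inner ℝ u v * inner ℝ u v := by
  simp only [inner_sub_left, inner_sub_right, inner_neg_left, inner_neg_right,
    real_inner_comm u v]
  ring

lemma sin_mul_dist_eq_ceva_aux (P X Y : EuclideanSpace ℝ (Fin 2)) :
    Real.sin (∠ P X Y) * dist P X * dist X Y =
      Real.sin (∠ P Y X) * dist P Y * dist X Y := by
  rw [EuclideanGeometry.angle, EuclideanGeometry.angle, mul_assoc, mul_assoc]
  rw [dist_eq_norm_vsub (EuclideanSpace ℝ (Fin 2)),
    dist_eq_norm_vsub (EuclideanSpace ℝ (Fin 2)),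
    dist_eq_norm_vsub (EuclideanSpace ℝ (Fin 2)) P Y]
  have hnorm : ‖(X : EuclideanSpace ℝ (Fin 2)) -ᵥ Y‖ = ‖Y -ᵥ X‖ := by
    simp only [vsub_eq_sub]; exact norm_sub_rev X Y
  rw [hnorm, sin_angle_mul_norm_mul_norm, ← hnorm, sin_angle_mul_norm_mul_norm]
  congr 1
  have e1 : (P : EuclideanSpace ℝ (Fin 2)) -ᵥ Y = (P -ᵥ X) - (Y -ᵥ X) := by
    simp only [vsub_eq_sub]; abel
  have e2 : (X : EuclideanSpace ℝ (Fin 2)) -ᵥ Y = -(Y -ᵥ X) := by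
    simp only [vsub_eq_sub]; abel
  rw [e1, e2]
  exact (gram_eq_ceva_aux (P -ᵥ X) (Y -ᵥ X)).symm

lemma sin_mul_dist_eq_ceva_aux' (P X Y : EuclideanSpace ℝ (Fin 2)) (hXY : X ≠ Y) :
    Real.sin (∠ P X Y) * dist P X = Real.sin (∠ P Y X) * dist P Y :=
  mul_right_cancel₀ (dist_ne_zero.mpr hXY) (sin_mul_dist_eq_ceva_aux P X Y)

theorem ceva_trig
    (A B C P : EuclideanSpace ℝ (Fin 2))
    (h : AffineIndependent ℝ ![A, B, C])
    (hP : P ∈ interior (convexHull ℝ ({A, B, C} : Set (EuclideanSpace ℝ (Fin 2))))) :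
    Real.sin (∠ P A B) * Real.sin (∠ P B C) * Real.sin (∠ P C A) =
      Real.sin (∠ P A C) * Real.sin (∠ P B A) * Real.sin (∠ P C B) := by
  have hcard : Fintype.card (Fin 3) = Module.finrank ℝ (EuclideanSpace ℝ (Fin 2)) + 1 := by
    simp [finrank_euclideanSpace_fin]
  have htop : affineSpan ℝ (Set.range ![A, B, C]) = ⊤ :=
    h.affineSpan_eq_top_iff_card_eq_finrank_add_one.mpr hcard
  let b : AffineBasis (Fin 3) ℝ (EuclideanSpace ℝ (Fin 2)) := ⟨![A, B, C], h, htop⟩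
  have hrange : Set.range ![A, B, C] = ({A, B, C} : Set (EuclideanSpace ℝ (Fin 2))) := by
    ext x; simp [Matrix.range_cons, Matrix.range_empty]; tauto
  have hP' : ∀ i, 0 < b.coord i P := by
    have : P ∈ interior (convexHull ℝ (Set.range b)) := by
      show P ∈ interior (convexHull ℝ (Set.range ![A, B, C]))
      rwa [hrange]
    rwa [b.interior_convexHull] at this
  have hPne : ∀ i : Fin 3, P ≠ ![A, B, C] i := by
    intro i hEq
    have h2 : ∀ j, j ≠ i → b.coord j P = 0 := by
      intro j hj
      have : b.coord j (b i) = 0 := b.coord_apply_ne hj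
      rwa [show b i = P from hEq.symm] at this
    rcases eq_or_ne i 0 with h0 | h0
    · have := hP' 1
      rw [h2 1 (by rw [h0]; decide)] at this
      exact lt_irrefl _ this
    · have := hP' 0
      rw [h2 0 (Ne.symm h0)] at this
      exact lt_irrefl _ this
  have hPA : P ≠ A := by simpa using hPne 0
  have hPB : P ≠ B := by simpa using hPne 1
  have hPC : P ≠ C := by simpa using hPne 2
  have hAB : A ≠ B := by
    have := h.injective.ne (show (0 : Fin 3) ≠ 1 by decide); simpa using this
  have hBC : B ≠ C := by
    have := h.injective.ne (show (1 : Fin 3) ≠ 2 by decide); simpa using this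
  have hCA : C ≠ A := by
    have := h.injective.ne (show (2 : Fin 3) ≠ 0 by decide); simpa using this
  have h1 := sin_mul_dist_eq_ceva_aux' P A B hAB
  have h2 := sin_mul_dist_eq_ceva_aux' P B C hBC
  have h3 := sin_mul_dist_eq_ceva_aux' P C A hCA
  have hprod : (dist P A * dist P B * dist P C) ≠ 0 := by
    simp [dist_ne_zero, hPA, hPB, hPC]
  apply mul_right_cancel₀ hprod
  calc Real.sin (∠ P A B) * Real.sin (∠ P B C) * Real.sin (∠ P C A) *
        (dist P A * dist P B * dist P C)
      = (Real.sin (∠ P A B) * dist P A) * (Real.sin (∠ P B C) * dist P B) *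
        (Real.sin (∠ P C A) * dist P C) := by ring
    _ = (Real.sin (∠ P B A) * dist P B) * (Real.sin (∠ P C B) * dist P C) *
        (Real.sin (∠ P A C) * dist P A) := by rw [h1, h2, h3]
    _ = Real.sin (∠ P A C) * Real.sin (∠ P B A) * Real.sin (∠ P C B) *
        (dist P A * dist P B * dist P C) := by ring
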